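/- In a Hadamard space, for any point x and probability measure P with finite first moment, the directional derivative of the Fréchet function at x along a unit-speed geodesic γ with γ(0) = x and direction σ exists and equals −∫ cos(∠_x(σ, dir_x(z))) · d(x,z) dP(z), where the integrand vanishes at z = x by convention. -/

import Mathlib

open MeasureTheory Set Filter Real

class HadamardSpace (M : Type*) [MetricSpace M] : Prop where
  complete : CompleteSpace M
  npc : ∀ x y : M, ∃ m : M, ∀ z : M,
    dist z m ^ 2 ≤ dist z x ^ 2 / 2 + dist z y ^ 2 / 2 - dist x y ^ 2 / 4

/-- A unit speed geodesic on the interval [0, L]. -/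
def IsUnitSpeedGeodesicOn {M : Type*} [MetricSpace M] (γ : ℝ → M) (L : ℝ) : Prop :=
  ∀ s ∈ Icc (0:ℝ) L, ∀ t ∈ Icc (0:ℝ) L, dist (γ s) (γ t) = |s - t|

/-- `A` is the Alexandrov angle at `γ 0 = γ' 0` between geodesics `γ` and `γ'`,
defined by the comparison limit. -/
def IsAlexandrovAngle {M : Type*} [MetricSpace M] (γ γ' : ℝ → M) (A : ℝ) : Prop :=
  Tendsto (fun p : ℝ × ℝ =>
      Real.arccos ((p.1 ^ 2 + p.2 ^ 2 - dist (γ p.1) (γ' p.2) ^ 2) / (2 * p.1 * p.2)))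
    ((nhdsWithin 0 (Ioi 0)) ×ˢ (nhdsWithin 0 (Ioi 0))) (nhds A)

/-- A continuous midpoint-convex function on `[0, d]` lies below its chords. -/
lemma below_chord {H : ℝ → ℝ} {d : ℝ} (hd : 0 < d)
    (hcont : ContinuousOn H (Icc 0 d))
    (hmid : ∀ a ∈ Icc (0:ℝ) d, ∀ b ∈ Icc (0:ℝ) d, H ((a+b)/2) ≤ (H a + H b)/2)
    {s : ℝ} (hs : s ∈ Icc (0:ℝ) d) :
    H s ≤ (1 - s/d) * H 0 + (s/d) * H d := by
  set K : ℝ → ℝ := fun u => H u - ((1 - u/d) * H 0 + (u/d) * H d) with hK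
  have hKcont : ContinuousOn K (Icc 0 d) := by
    apply hcont.sub; fun_prop
  have hKmid : ∀ a ∈ Icc (0:ℝ) d, ∀ b ∈ Icc (0:ℝ) d, K ((a+b)/2) ≤ (K a + K b)/2 := by
    intro a ha b hb
    have h1 := hmid a ha b hb
    have hlin : (1 - ((a+b)/2)/d) * H 0 + (((a+b)/2)/d) * H d
        = (((1 - a/d)*H 0 + (a/d)*H d) + ((1 - b/d)*H 0 + (b/d)*H d))/2 := by
      field_simp; ring
    simp only [hK]
    rw [hlin]
    linarith
  have hK0 : K 0 = 0 := by simp [hK]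
  have hKd : K d = 0 := by
    simp only [hK, div_self hd.ne']; ring
  suffices h : K s ≤ 0 by simpa [hK, sub_nonpos] using h
  by_contra hpos
  push_neg at hpos
  obtain ⟨u, huI, humax⟩ := isCompact_Icc.exists_isMaxOn (nonempty_Icc.2 hd.le) hKcont
  set m := K u with hm
  have hMpos : 0 < m := lt_of_lt_of_le hpos (humax hs)
  set T : Set ℝ := Icc 0 d ∩ K ⁻¹' {m} with hT
  have hTclosed : IsClosed T :=
    hKcont.preimage_isClosed_of_isClosed isClosed_Icc isClosed_singleton
  have hTne : T.Nonempty := ⟨u, huI, rfl⟩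
  have hTbdd : BddBelow T := ⟨0, fun v hv => hv.1.1⟩
  set u₀ := sInf T with hu₀
  have hu₀T : u₀ ∈ T := hTclosed.csInf_mem hTne hTbdd
  have hu₀I : u₀ ∈ Icc 0 d := hu₀T.1
  have hKu₀ : K u₀ = m := hu₀T.2
  have hu₀pos : 0 < u₀ := by
    rcases lt_or_eq_of_le hu₀I.1 with h | h
    · exact h
    · exfalso; rw [← h] at hKu₀; rw [hK0] at hKu₀; linarith
  have hu₀lt : u₀ < d := by
    rcases lt_or_eq_of_le hu₀I.2 with h | h
    · exact h
    · exfalso; rw [h] at hKu₀; rw [hKd] at hKu₀; linarith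
  set h₀ := min u₀ (d - u₀) with hh₀
  have hh₀pos : 0 < h₀ := lt_min hu₀pos (by linarith)
  have hm1 : h₀ ≤ u₀ := min_le_left _ _
  have hm2 : h₀ ≤ d - u₀ := min_le_right _ _
  have haI : u₀ - h₀ ∈ Icc (0:ℝ) d := ⟨by linarith, by linarith⟩
  have hbI : u₀ + h₀ ∈ Icc (0:ℝ) d := ⟨by linarith, by linarith⟩
  have hmideq : ((u₀ - h₀) + (u₀ + h₀))/2 = u₀ := by ring
  have hstep := hKmid _ haI _ hbI
  rw [hmideq, hKu₀] at hstep
  have hKa' : K (u₀ - h₀) ≤ m := humax haI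
  have hKa : K (u₀ - h₀) < m := by
    rcases lt_or_eq_of_le hKa' with h | h
    · exact h
    · exfalso
      have : u₀ ≤ u₀ - h₀ := csInf_le hTbdd ⟨haI, h⟩
      linarith
  have hKb : K (u₀ + h₀) ≤ m := humax hbI
  clear_value K m T u₀ h₀
  linarith

/-- NPC inequality along a geodesic. -/
lemma npc_along_geodesic {M : Type*} [MetricSpace M] [HadamardSpace M]
    {Γ : ℝ → M} {d : ℝ} (hΓ : IsUnitSpeedGeodesicOn Γ d)
    (w : M) {a b : ℝ} (ha : a ∈ Icc (0:ℝ) d) (hb : b ∈ Icc (0:ℝ) d) :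
    dist w (Γ ((a+b)/2)) ^ 2 ≤ dist w (Γ a) ^ 2 / 2 + dist w (Γ b) ^ 2 / 2 - (a-b)^2/4 := by
  obtain ⟨m, hm⟩ := HadamardSpace.npc (Γ a) (Γ b)
  have hmidI : (a+b)/2 ∈ Icc (0:ℝ) d := ⟨by cases ha; cases hb; linarith, by cases ha; cases hb; linarith⟩
  have hab : dist (Γ a) (Γ b) = |a - b| := hΓ a ha b hb
  have h1 : dist (Γ ((a+b)/2)) (Γ a) ^ 2 = (a - b)^2 / 4 := by
    rw [hΓ _ hmidI a ha, sq_abs, show (a+b)/2 - a = (b - a)/2 by ring]; ring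
  have h2 : dist (Γ ((a+b)/2)) (Γ b) ^ 2 = (a - b)^2 / 4 := by
    rw [hΓ _ hmidI b hb, sq_abs, show (a+b)/2 - b = (a - b)/2 by ring]; ring
  have hmid : Γ ((a+b)/2) = m := by
    have := hm (Γ ((a+b)/2))
    rw [h1, h2, hab, sq_abs] at this
    have h0 : dist (Γ ((a+b)/2)) m ^ 2 ≤ 0 := by linarith
    have := sq_nonneg (dist (Γ ((a+b)/2)) m)
    have : dist (Γ ((a+b)/2)) m = 0 := by nlinarith [@dist_nonneg M _ (Γ ((a+b)/2)) m]
    exact dist_eq_zero.1 this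
  have := hm w
  rw [← hmid, hab, sq_abs] at this
  exact this

set_option maxHeartbeats 1600000 in
/-- First variation formula. -/
lemma first_variation {M : Type*} [MetricSpace M] [HadamardSpace M]
    {x : M} {L : ℝ} (hL : 0 < L) {γ : ℝ → M} (hγ0 : γ 0 = x) (hγ : IsUnitSpeedGeodesicOn γ L)
    {z : M} {Γz : ℝ → M} (hΓz0 : Γz 0 = x) (hΓz1 : Γz (dist x z) = z)
    (hΓz : IsUnitSpeedGeodesicOn Γz (dist x z))
    (hzx : z ≠ x) {A : ℝ}
    (hA : Tendsto (fun p : ℝ × ℝ =>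
      Real.arccos ((p.1 ^ 2 + p.2 ^ 2 - dist (γ p.1) (Γz p.2) ^ 2) / (2 * p.1 * p.2)))
      ((nhdsWithin 0 (Ioi 0)) ×ˢ (nhdsWithin 0 (Ioi 0))) (nhds A)) :
    Tendsto (fun t => (dist (γ t) z - dist x z)/t) (nhdsWithin 0 (Ioi 0))
      (nhds (-Real.cos A)) := by
  obtain ⟨d, hdd⟩ : ∃ d, d = dist x z := ⟨_, rfl⟩
  rw [← hdd] at hΓz1 hΓz ⊢
  have hd : 0 < d := hdd ▸ dist_pos.2 hzx.symm
  -- basic geodesic facts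
  have hγx : ∀ t ∈ Icc (0:ℝ) L, dist (γ t) x = t := by
    intro t ht
    have := hγ t ht 0 ⟨le_refl 0, hL.le⟩
    rw [hγ0] at this; rw [this]; rw [abs_of_nonneg (by linarith [ht.1])]; ring
  have hΓx : ∀ s ∈ Icc (0:ℝ) d, dist x (Γz s) = s := by
    intro s hs
    have := hΓz 0 ⟨le_refl 0, hd.le⟩ s hs
    rw [hΓz0] at this; rw [this, abs_of_nonpos (by linarith [hs.1])]; ring
  have hΓzz : ∀ s ∈ Icc (0:ℝ) d, dist (Γz s) z = d - s := by
    intro s hs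
    have := hΓz s hs d ⟨hd.le, le_refl d⟩
    rw [hΓz1] at this; rw [this, abs_of_nonpos (by linarith [hs.2])]; ring
  -- the comparison quantity
  obtain ⟨q, hq_def⟩ : ∃ q : ℝ × ℝ → ℝ, q = fun p =>
      (p.1 ^ 2 + p.2 ^ 2 - dist (γ p.1) (Γz p.2) ^ 2) / (2 * p.1 * p.2) := ⟨_, rfl⟩
  have hqbound : ∀ t ∈ Ioc (0:ℝ) L, ∀ s ∈ Ioc (0:ℝ) d,
      -1 ≤ q (t, s) ∧ q (t, s) ≤ 1 := by
    intro t ht s hs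
    have ht1 := ht.1
    have hs1 := hs.1
    have h2ts : (0:ℝ) < 2 * t * s := by positivity
    have hγt : dist (γ t) x = t := hγx t ⟨ht.1.le, ht.2⟩
    have hΓs : dist x (Γz s) = s := hΓx s ⟨hs.1.le, hs.2⟩
    have hDle : dist (γ t) (Γz s) ≤ t + s := by
      calc dist (γ t) (Γz s) ≤ dist (γ t) x + dist x (Γz s) := dist_triangle _ _ _
      _ = t + s := by rw [hγt, hΓs]
    have hDge1 : t - s ≤ dist (γ t) (Γz s) := by
      have h := dist_triangle (γ t) (Γz s) x
      rw [dist_comm (Γz s) x, hΓs, hγt] at h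
      linarith
    have hDge2 : s - t ≤ dist (γ t) (Γz s) := by
      have := dist_triangle x (γ t) (Γz s)
      rw [dist_comm x (γ t), hγt] at this; linarith
    have hDnn : (0:ℝ) ≤ dist (γ t) (Γz s) := dist_nonneg
    constructor
    · simp only [hq_def]
      rw [le_div_iff₀ h2ts]
      nlinarith [hDle, hDnn]
    · simp only [hq_def]
      rw [div_le_one h2ts]
      nlinarith [hDge1, hDge2, hDnn]
  -- q tends to cos A
  have hq_tendsto : Tendsto q ((nhdsWithin (0:ℝ) (Ioi 0)) ×ˢ (nhdsWithin (0:ℝ) (Ioi 0)))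
      (nhds (Real.cos A)) := by
    have hcomp := (Real.continuous_cos.tendsto A).comp hA
    apply hcomp.congr'
    have hmem : (Ioo (0:ℝ) L) ×ˢ (Ioo (0:ℝ) d) ∈
        ((nhdsWithin (0:ℝ) (Ioi 0)) ×ˢ (nhdsWithin (0:ℝ) (Ioi 0))) :=
      prod_mem_prod (Ioo_mem_nhdsGT_of_mem ⟨le_refl 0, hL⟩)
        (Ioo_mem_nhdsGT_of_mem ⟨le_refl 0, hd⟩)
    filter_upwards [hmem] with p hp
    obtain ⟨hp1, hp2⟩ := hp
    have hb := hqbound p.1 ⟨hp1.1, hp1.2.le⟩ p.2 ⟨hp2.1, hp2.2.le⟩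
    simp only [hq_def] at hb ⊢
    exact Real.cos_arccos hb.1 hb.2
  -- now the ε-δ argument
  rw [Metric.tendsto_nhds]
  intro ε hε
  have hq' := Metric.tendsto_nhds.1 hq_tendsto (ε/2) (by positivity)
  rw [Filter.eventually_iff, Filter.mem_prod_iff] at hq'
  obtain ⟨U, hU, V, hV, hUV⟩ := hq'
  obtain ⟨δ₁, hδ₁, hsub₁⟩ := mem_nhdsGT_iff_exists_Ioo_subset.1 hU
  obtain ⟨δ₂, hδ₂, hsub₂⟩ := mem_nhdsGT_iff_exists_Ioo_subset.1 hV
  rw [Set.mem_Ioi] at hδ₁ hδ₂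
  obtain ⟨s, hs_def⟩ : ∃ s : ℝ, s = min δ₂ d / 2 := ⟨_, rfl⟩
  have hspos : 0 < s := by rw [hs_def]; have := lt_min hδ₂ hd; linarith
  have hsδ₂ : s < δ₂ := by
    rw [hs_def]
    have h1 : min δ₂ d ≤ δ₂ := min_le_left _ _
    have : (0:ℝ) < min δ₂ d := lt_min hδ₂ hd
    linarith
  have hsd : s < d := by
    rw [hs_def]
    have h1 : min δ₂ d ≤ d := min_le_right _ _
    have : (0:ℝ) < min δ₂ d := lt_min hδ₂ hd
    linarith
  obtain ⟨τ, hτ_def⟩ : ∃ τ : ℝ, τ = min δ₁ (min L (min (s/2) (ε*s/2))) := ⟨_, rfl⟩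
  have hτpos : 0 < τ := by
    rw [hτ_def]
    have h1 : (0:ℝ) < s/2 := by linarith
    have h2 : (0:ℝ) < ε*s/2 := by nlinarith
    exact lt_min hδ₁ (lt_min hL (lt_min h1 h2))
  filter_upwards [Ioo_mem_nhdsGT_of_mem (show (0:ℝ) ∈ Ico 0 τ from ⟨le_refl 0, hτpos⟩)]
    with t ht
  obtain ⟨ht0, htτ⟩ := ht
  rw [hτ_def] at htτ
  have htδ₁ : t < δ₁ := lt_of_lt_of_le htτ (min_le_left _ _)
  have htL : t < L := lt_of_lt_of_le htτ ((min_le_right _ _).trans (min_le_left _ _))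
  have hts2 : t < s/2 := lt_of_lt_of_le htτ
    ((min_le_right _ _).trans ((min_le_right _ _).trans (min_le_left _ _)))
  have htε : t < ε*s/2 := lt_of_lt_of_le htτ
    ((min_le_right _ _).trans ((min_le_right _ _).trans (min_le_right _ _)))
  -- q value at (t, s)
  obtain ⟨qv, hqv_def⟩ : ∃ qv : ℝ, qv = q (t, s) := ⟨_, rfl⟩
  have hqts : |qv - Real.cos A| < ε/2 := by
    have hmem : (t, s) ∈ U ×ˢ V := ⟨hsub₁ ⟨ht0, htδ₁⟩, hsub₂ ⟨hspos, hsδ₂⟩⟩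
    have := hUV hmem
    rw [Set.mem_setOf_eq, Real.dist_eq] at this
    rw [hqv_def]; exact this
  obtain ⟨hqv1, hqv2⟩ : -1 ≤ qv ∧ qv ≤ 1 := by
    rw [hqv_def]; exact hqbound t ⟨ht0, htL.le⟩ s ⟨hspos, hsd.le⟩
  obtain ⟨D, hD_def⟩ : ∃ D : ℝ, D = dist (γ t) (Γz s) := ⟨_, rfl⟩
  obtain ⟨X, hX_def⟩ : ∃ X : ℝ, X = dist (γ t) z := ⟨_, rfl⟩
  have hDnn : (0:ℝ) ≤ D := hD_def ▸ dist_nonneg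
  have hXnn : (0:ℝ) ≤ X := hX_def ▸ dist_nonneg
  have h2ts : (0:ℝ) < 2 * t * s := by positivity
  have hD2 : D^2 = t^2 + s^2 - 2*t*s*qv := by
    rw [hD_def, hqv_def, hq_def]; field_simp; ring
  have hγt : dist (γ t) x = t := hγx t ⟨ht0.le, htL.le⟩
  have hXle : X ≤ D + (d - s) := by
    rw [hX_def, hD_def]
    have h1 := dist_triangle (γ t) (Γz s) z
    rw [hΓzz s ⟨hspos.le, hsd.le⟩] at h1
    exact h1
  -- convexity chord inequality
  have hX2 : d^2 + t^2 - 2*t*d*qv ≤ X^2 := by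
    obtain ⟨H, hH_def⟩ : ∃ H : ℝ → ℝ, H = fun u => dist (γ t) (Γz u)^2 - u^2 := ⟨_, rfl⟩
    have hlip : LipschitzOnWith 1 Γz (Icc 0 d) := by
      apply LipschitzOnWith.of_dist_le_mul
      intro u hu v hv
      rw [hΓz u hu v hv, NNReal.coe_one, one_mul, Real.dist_eq]
    have hHcont : ContinuousOn H (Icc 0 d) := by
      rw [hH_def]
      apply ContinuousOn.sub
      · exact ((continuous_const.dist continuous_id).comp_continuousOn hlip.continuousOn).pow 2
      · exact (continuous_pow 2).continuousOn
    have hHmid : ∀ a ∈ Icc (0:ℝ) d, ∀ b ∈ Icc (0:ℝ) d, H ((a+b)/2) ≤ (H a + H b)/2 := by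
      intro a ha b hb
      have hnpc := npc_along_geodesic hΓz (γ t) ha hb
      rw [hH_def]
      simp only
      nlinarith [hnpc]
    have chord := below_chord hd hHcont hHmid ⟨hspos.le, hsd.le⟩
    have hH0 : H 0 = t^2 := by
      rw [hH_def]; simp only
      rw [hΓz0, hγt]; ring
    have hHd : H d = X^2 - d^2 := by
      rw [hH_def, hX_def]; simp only; rw [hΓz1]
    have hHs : H s = t^2 - 2*t*s*qv := by
      rw [hH_def]; simp only
      rw [← hD_def, hD2]; try ring
    rw [hH0, hHd, hHs] at chord
    have chord' : d * (t^2 - 2*t*s*qv) ≤ (d - s) * t^2 + s * (X^2 - d^2) := by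
      have heq : d * ((1 - s/d) * t^2 + (s/d) * (X^2 - d^2))
          = (d - s) * t^2 + s * (X^2 - d^2) := by field_simp; try ring
      calc d * (t^2 - 2*t*s*qv) ≤ d * ((1 - s/d) * t^2 + (s/d) * (X^2 - d^2)) :=
            mul_le_mul_of_nonneg_left chord hd.le
      _ = (d - s) * t^2 + s * (X^2 - d^2) := heq
    nlinarith [chord', hspos]
  -- upper bound
  have hXd_le : (X - d)/t ≤ -qv + t/s := by
    have ha : s/2 < s - t*qv := by nlinarith
    have hapos : 0 < s - t*qv := by linarith
    have hDle2 : D ≤ (s - t*qv) + t^2/(2*(s - t*qv)) := by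
      have hsq : D^2 ≤ ((s - t*qv) + t^2/(2*(s - t*qv)))^2 := by
        have expand : ((s - t*qv) + t^2/(2*(s - t*qv)))^2
            = (s - t*qv)^2 + t^2 + (t^2/(2*(s-t*qv)))^2 := by
          field_simp; ring
        rw [expand, hD2]
        nlinarith [sq_nonneg (t*qv), sq_nonneg (t^2/(2*(s-t*qv)))]
      have h2 := Real.sqrt_le_sqrt hsq
      rw [Real.sqrt_sq_eq_abs, Real.sqrt_sq_eq_abs] at h2
      have h3 : (0:ℝ) ≤ t^2/(2*(s - t*qv)) := div_nonneg (sq_nonneg t) (by linarith)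
      rw [abs_of_nonneg hDnn, abs_of_nonneg (by linarith)] at h2
      exact h2
    have hfrac : t^2/(2*(s - t*qv)) ≤ t^2/s := by
      apply div_le_div_of_nonneg_left (by nlinarith) hspos
      linarith
    have hXd : X - d ≤ -(t*qv) + t^2/s := by linarith
    rw [div_le_iff₀ ht0]
    calc X - d ≤ -(t*qv) + t^2/s := hXd
    _ = (-qv + t/s) * t := by field_simp
  -- lower bound
  have hXd_ge : -qv ≤ (X - d)/t := by
    have hXge : d - t*qv ≤ X := by
      have hq2 : t^2*qv^2 ≤ t^2 := by nlinarith [sq_nonneg t, mul_nonneg (mul_nonneg (sub_nonneg.2 hqv2) (by linarith : (0:ℝ) ≤ 1 + qv)) (sq_nonneg t)]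
      have h1 : (d - t*qv)^2 ≤ X^2 := by nlinarith [hX2]
      have h2 := Real.sqrt_le_sqrt h1
      rw [Real.sqrt_sq_eq_abs, Real.sqrt_sq_eq_abs, abs_of_nonneg hXnn] at h2
      linarith [le_abs_self (d - t*qv)]
    rw [le_div_iff₀ ht0]
    linarith
  -- combine
  rw [Real.dist_eq, ← hX_def, abs_lt]
  rw [abs_lt] at hqts
  obtain ⟨hq1, hq2⟩ := hqts
  have hts : t/s < ε/2 := by rw [div_lt_iff₀ hspos]; linarith
  constructor
  · linarith
  · linarith

/-- Directional derivative formula for the Fréchet function in a Hadamard space: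
along a unit-speed geodesic γ with γ 0 = x in direction σ,
∇_σ F_P(x) = −∫ cos(∠_x(σ, dir_x z)) · d(x,z) dP(z) (the integrand vanishing at
z = x since d(x,x) = 0). -/
theorem frechet_directional_derivative
    {M : Type*} [MetricSpace M] [HadamardSpace M] [MeasurableSpace M] [BorelSpace M]
    (P : Measure M) [IsProbabilityMeasure P]
    (x : M) (hP : Integrable (fun y => dist x y) P)
    (L : ℝ) (hL : 0 < L) (γ : ℝ → M) (hγ0 : γ 0 = x) (hγ : IsUnitSpeedGeodesicOn γ L)
    (Γ : M → ℝ → M)  -- Γ z is the unit-speed geodesic from x to z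
    (hΓ0 : ∀ z : M, Γ z 0 = x) (hΓ1 : ∀ z : M, Γ z (dist x z) = z)
    (hΓ : ∀ z : M, IsUnitSpeedGeodesicOn (Γ z) (dist x z))
    (A : M → ℝ)  -- A z = ∠_x(σ, dir_x z)
    (hA : ∀ z : M, z ≠ x → IsAlexandrovAngle γ (Γ z) (A z))
    (z₀ : M) :
    HasDerivWithinAt
      (fun t => (1 / 2 : ℝ) * ∫ y, (dist (γ t) y ^ 2 - dist z₀ y ^ 2) ∂P)
      (- ∫ z, Real.cos (A z) * dist x z ∂P) (Ici (0:ℝ)) 0 := by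
  have hγx : ∀ t ∈ Icc (0:ℝ) L, dist (γ t) x = t := by
    intro t ht
    have := hγ t ht 0 ⟨le_refl 0, hL.le⟩
    rw [hγ0] at this; rw [this]; rw [abs_of_nonneg (by linarith [ht.1])]; ring
  -- the dominated convergence step
  have key : Tendsto (fun t => ∫ y, (dist (γ t) y ^ 2 - dist x y ^ 2)/(2*t) ∂P)
      (nhdsWithin (0:ℝ) (Ioi 0)) (nhds (∫ y, -(Real.cos (A y) * dist x y) ∂P)) := by
    apply tendsto_integral_filter_of_dominated_convergence
      (bound := fun y => dist x y + L)
    · apply Filter.Eventually.of_forall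
      intro t
      exact (by fun_prop : Continuous fun y : M => (dist (γ t) y ^ 2 - dist x y ^ 2)/(2*t)).aestronglyMeasurable
    · filter_upwards [Ioo_mem_nhdsGT_of_mem (show (0:ℝ) ∈ Ico 0 L from ⟨le_refl 0, hL⟩)]
        with t ht
      apply ae_of_all
      intro y
      have ht0 : 0 < t := ht.1
      have hγt : dist (γ t) x = t := hγx t ⟨ht.1.le, ht.2.le⟩
      have h1 : |dist (γ t) y - dist x y| ≤ t := by
        have := abs_dist_sub_le (γ t) x y
        rwa [hγt] at this
      have h2 : dist (γ t) y ≤ dist x y + t := by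
        have := dist_triangle (γ t) x y
        rw [hγt] at this; linarith
      have hsum : (0:ℝ) ≤ dist (γ t) y + dist x y := by
        have := @dist_nonneg M _ (γ t) y; have := @dist_nonneg M _ x y; linarith
      have habs : |dist (γ t) y ^ 2 - dist x y ^ 2|
          = |dist (γ t) y - dist x y| * (dist (γ t) y + dist x y) := by
        rw [show dist (γ t) y ^ 2 - dist x y ^ 2
            = (dist (γ t) y - dist x y) * (dist (γ t) y + dist x y) by ring, abs_mul,
          abs_of_nonneg hsum]
      rw [Real.norm_eq_abs, abs_div, abs_of_pos (by linarith : (0:ℝ) < 2*t), habs,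
        div_le_iff₀ (by linarith : (0:ℝ) < 2*t)]
      have h3 : dist (γ t) y + dist x y ≤ 2 * dist x y + t := by linarith
      have h4 : |dist (γ t) y - dist x y| * (dist (γ t) y + dist x y) ≤ t * (2 * dist x y + t) :=
        mul_le_mul h1 h3 hsum ht0.le
      nlinarith [@dist_nonneg M _ x y, ht.2]
    · exact hP.add (integrable_const L)
    · apply ae_of_all
      intro y
      by_cases hy : y = x
      · subst hy
        have heq : ∀ᶠ t in nhdsWithin (0:ℝ) (Ioi 0),
            t/2 = (dist (γ t) y ^ 2 - dist y y ^ 2)/(2*t) := by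
          filter_upwards [Ioo_mem_nhdsGT_of_mem (show (0:ℝ) ∈ Ico 0 L from ⟨le_refl 0, hL⟩)]
            with t ht
          have ht' : t ≠ 0 := ne_of_gt ht.1
          rw [hγx t ⟨ht.1.le, ht.2.le⟩, dist_self]
          field_simp
          ring
        have hlim : Tendsto (fun t : ℝ => t/2) (nhdsWithin (0:ℝ) (Ioi 0)) (nhds 0) := by
          have : Tendsto (fun t : ℝ => t/2) (nhds 0) (nhds 0) := by
            have := (((continuous_id : Continuous (id : ℝ → ℝ)).div_const 2)).tendsto 0
            simpa using this
          exact this.mono_left nhdsWithin_le_nhds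
        have := hlim.congr' heq
        simpa using this
      · have FV := first_variation hL hγ0 hγ (hΓ0 y) (hΓ1 y) (hΓ y) hy (hA y hy)
        have hc : Tendsto (fun t => dist (γ t) y) (nhdsWithin (0:ℝ) (Ioi 0))
            (nhds (dist x y)) := by
          have h0 : Tendsto (fun t : ℝ => t) (nhdsWithin (0:ℝ) (Ioi 0)) (nhds 0) :=
            tendsto_id.mono_left nhdsWithin_le_nhds
          have hprod := h0.mul FV
          have heq : ∀ᶠ t in nhdsWithin (0:ℝ) (Ioi 0),
              dist x y + t * ((dist (γ t) y - dist x y)/t) = dist (γ t) y := by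
            filter_upwards [self_mem_nhdsWithin] with t ht
            rw [Set.mem_Ioi] at ht
            have ht' : t ≠ 0 := ne_of_gt ht
            field_simp
            ring
          have := (tendsto_const_nhds.add hprod).congr' heq
          simpa using this
        have hcc : Tendsto (fun _ : ℝ => dist x y) (nhdsWithin (0:ℝ) (Ioi 0))
            (nhds (dist x y)) := tendsto_const_nhds
        have hprod := FV.mul ((hc.add hcc).div_const 2)
        have hval : -Real.cos (A y) * ((dist x y + dist x y)/2)
            = -(Real.cos (A y) * dist x y) := by ring
        rw [hval] at hprod
        apply hprod.congr'
        filter_upwards [self_mem_nhdsWithin] with t ht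
        rw [Set.mem_Ioi] at ht
        have ht' : t ≠ 0 := ne_of_gt ht
        field_simp
        ring
  -- integrability of the integrands
  have hInt : ∀ u ∈ Icc (0:ℝ) L, Integrable (fun y => dist (γ u) y ^ 2 - dist z₀ y ^ 2) P := by
    intro u hu
    set K := L + dist x z₀ with hK
    have hKnn : 0 ≤ K := by have := @dist_nonneg M _ x z₀; rw [hK]; linarith
    have hγu : dist (γ u) x = u := hγx u hu
    have hduz : dist (γ u) z₀ ≤ K := by
      have := dist_triangle (γ u) x z₀
      rw [hγu] at this; rw [hK]; linarith [hu.2]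
    apply Integrable.mono' ((hP.const_mul (2*K)).add (integrable_const (K*(L+K))))
    · exact (by fun_prop : Continuous fun y : M => dist (γ u) y ^ 2 - dist z₀ y ^ 2).aestronglyMeasurable
    · apply ae_of_all
      intro y
      have h1 : |dist (γ u) y - dist z₀ y| ≤ dist (γ u) z₀ := abs_dist_sub_le _ _ _
      have h2 : dist (γ u) y ≤ dist x y + u := by
        have := dist_triangle (γ u) x y; rw [hγu] at this; linarith
      have h3 : dist z₀ y ≤ dist z₀ x + dist x y := dist_triangle _ _ _
      have h4 : dist z₀ x = dist x z₀ := dist_comm _ _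
      have hsum : (0:ℝ) ≤ dist (γ u) y + dist z₀ y := by
        have := @dist_nonneg M _ (γ u) y; have := @dist_nonneg M _ z₀ y; linarith
      have habs : |dist (γ u) y ^ 2 - dist z₀ y ^ 2|
          = |dist (γ u) y - dist z₀ y| * (dist (γ u) y + dist z₀ y) := by
        rw [show dist (γ u) y ^ 2 - dist z₀ y ^ 2
            = (dist (γ u) y - dist z₀ y) * (dist (γ u) y + dist z₀ y) by ring, abs_mul,
          abs_of_nonneg hsum]
      rw [Real.norm_eq_abs, habs]
      have h5 : dist (γ u) y + dist z₀ y ≤ 2 * dist x y + (L + K) := by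
        rw [hK] at *; linarith [hu.2]
      have h6 : |dist (γ u) y - dist z₀ y| * (dist (γ u) y + dist z₀ y)
          ≤ K * (2 * dist x y + (L + K)) := by
        apply mul_le_mul (h1.trans hduz) h5 hsum hKnn
      calc |dist (γ u) y - dist z₀ y| * (dist (γ u) y + dist z₀ y)
          ≤ K * (2 * dist x y + (L + K)) := h6
        _ = 2*K * dist x y + K*(L+K) := by ring
  -- relate the slope to the integral
  rw [hasDerivWithinAt_iff_tendsto_slope, Ici_sdiff_left]
  have hslope : ∀ᶠ t in nhdsWithin (0:ℝ) (Ioi 0),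
      (fun t => ∫ y, (dist (γ t) y ^ 2 - dist x y ^ 2)/(2*t) ∂P) t
      = slope (fun t => (1 / 2 : ℝ) * ∫ y, (dist (γ t) y ^ 2 - dist z₀ y ^ 2) ∂P) 0 t := by
    filter_upwards [Ioo_mem_nhdsGT_of_mem (show (0:ℝ) ∈ Ico 0 L from ⟨le_refl 0, hL⟩)]
      with t ht
    have ht0 : (0:ℝ) < t := ht.1
    have hIt := hInt t ⟨ht.1.le, ht.2.le⟩
    have hI0 := hInt 0 ⟨le_refl 0, hL.le⟩
    rw [slope_def_field]
    have hpt : (fun y => dist (γ t) y ^ 2 - dist x y ^ 2)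
        = fun y => (dist (γ t) y ^ 2 - dist z₀ y ^ 2) - (dist (γ 0) y ^ 2 - dist z₀ y ^ 2) := by
      funext y; rw [hγ0]; ring
    have hdiv : ∫ y, (dist (γ t) y ^ 2 - dist x y ^ 2)/(2*t) ∂P
        = (∫ y, (dist (γ t) y ^ 2 - dist x y ^ 2) ∂P)/(2*t) := integral_div _ _
    have ht' : t ≠ 0 := ne_of_gt ht0
    rw [hdiv, hpt, integral_sub hIt hI0]
    field_simp
    try ring
  rw [show (- ∫ z, Real.cos (A z) * dist x z ∂P) = ∫ y, -(Real.cos (A y) * dist x y) ∂P from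
    (integral_neg _).symm]
  exact key.congr' hslope
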